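/- Let (X,d) be a complete metric space equipped with a partial order ⪯ and T a self-mapping on X. Suppose T is increasing, T is continuous, there exists x₀ ∈ X with x₀ ⪯ T(x₀), and there exists φ ∈ Φ such that d(Tx,Ty) ≤ φ(d(x,y)) for all x,y ∈ X with x ⪯ y. Then T has a fixed point. -/

import Mathlib

open Filter

/-- Theorem 1.3 (continuity case): ordered Boyd–Wong type fixed point theorem with
`φ ∈ Φ` in a complete metric space with a partial order. -/
theorem stmt_16 {X : Type*} [MetricSpace X] [CompleteSpace X] [PartialOrder X]
    (T : X → X)
    (hmono : ∀ x y : X, x ≤ y → T x ≤ T y)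
    (hcont : Continuous T)
    (x₀ : X) (hx₀ : x₀ ≤ T x₀)
    (φ : ℝ → ℝ) (hφ0 : ∀ t : ℝ, 0 ≤ t → 0 ≤ φ t)
    (hφ1 : ∀ t : ℝ, 0 < t → φ t < t)
    (hφ2 : ∀ t : ℝ, 0 < t → ∃ L : ℝ, L < t ∧ Tendsto φ (nhdsWithin t (Set.Ioi t)) (nhds L))
    (hcontr : ∀ x y : X, x ≤ y → dist (T x) (T y) ≤ φ (dist x y)) :
    ∃ x : X, T x = x := by
  by_cases hfix : ∃ n : ℕ, T (T^[n] x₀) = T^[n] x₀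
  · obtain ⟨n, h⟩ := hfix; exact ⟨_, h⟩
  push_neg at hfix
  set x : ℕ → X := fun n => T^[n] x₀ with hxdef
  have hstep : ∀ n, x (n + 1) = T (x n) := fun n => Function.iterate_succ_apply' T n x₀
  -- the orbit is a chain
  have hchain1 : ∀ n, x n ≤ x (n + 1) := by
    intro n
    induction n with
    | zero => simpa [hxdef] using hx₀
    | succ n ih => rw [hstep, hstep]; exact hmono _ _ ih
  have hchain : Monotone x := monotone_nat_of_le_succ hchain1
  set D : ℕ → ℝ := fun n => dist (x n) (x (n + 1)) with hDdef
  have hDpos : ∀ n, 0 < D n := by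
    intro n
    rw [hDdef]
    refine dist_pos.mpr fun h => hfix n ?_
    rw [← hstep]
    exact h.symm
  have hDcontr : ∀ n, D (n + 1) ≤ φ (D n) := by
    intro n
    have : dist (T (x n)) (T (x (n + 1))) ≤ φ (dist (x n) (x (n + 1))) :=
      hcontr _ _ (hchain1 n)
    simpa [hDdef, hstep] using this
  have hDanti : ∀ n, D (n + 1) < D n := fun n => (hDcontr n).trans_lt (hφ1 _ (hDpos n))
  have hanti : Antitone D := antitone_nat_of_succ_le fun n => (hDanti n).le
  have hbdd : BddBelow (Set.range D) := ⟨0, by rintro - ⟨n, rfl⟩; exact dist_nonneg⟩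
  set δ : ℝ := ⨅ n, D n with hδdef
  have hδle : ∀ n, δ ≤ D n := fun n => ciInf_le hbdd n
  have htendD : Tendsto D atTop (nhds δ) := tendsto_atTop_ciInf hanti hbdd
  have hδnn : 0 ≤ δ := le_ciInf fun n => dist_nonneg
  -- δ = 0
  have hδ0 : δ = 0 := by
    by_contra h
    have hδpos : 0 < δ := lt_of_le_of_ne hδnn (Ne.symm h)
    obtain ⟨L, hL, htend⟩ := hφ2 δ hδpos
    have hev : ∀ᶠ t in nhdsWithin δ (Set.Ioi δ), φ t < δ := htend.eventually_lt_const hL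
    obtain ⟨u, hu, hsub⟩ := mem_nhdsGT_iff_exists_Ioo_subset.mp hev
    have hDlt : ∀ n, δ < D n := by
      intro n
      refine lt_of_le_of_ne (hδle n) fun h => ?_
      have := hDanti n
      rw [← h] at this
      exact absurd (hδle (n + 1)) (not_le.mpr this)
    obtain ⟨n, hn⟩ := (htendD.eventually (eventually_lt_nhds hu)).exists
    have : φ (D n) < δ := hsub ⟨hDlt n, hn⟩
    exact absurd (hδle (n + 1)) (not_le.mpr ((hDcontr n).trans_lt this))
  rw [hδ0] at htendD
  -- key quantitative Cauchy estimate
  have key : ∀ ε : ℝ, 0 < ε → ∃ N, ∀ n, N ≤ n → ∀ m, n ≤ m → dist (x n) (x m) < 2 * ε := by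
    intro ε hε
    obtain ⟨L, hL, htend⟩ := hφ2 ε hε
    have hc₁ : L < (L + ε) / 2 := by linarith
    have hc₁' : (L + ε) / 2 < ε := by linarith
    have hev : ∀ᶠ t in nhdsWithin ε (Set.Ioi ε), φ t < (L + ε) / 2 :=
      htend.eventually_lt_const hc₁
    obtain ⟨u, hu, hsub⟩ := mem_nhdsGT_iff_exists_Ioo_subset.mp hev
    set c : ℝ := max ((L + ε) / 2) (φ ε) with hcdef
    have hcε : c < ε := max_lt hc₁' (hφ1 ε hε)
    have hu' : ε < u := hu
    set η : ℝ := min (u - ε) ε with hηdef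
    have hηpos : 0 < η := lt_min (by linarith) hε
    have hηε : η ≤ ε := min_le_right _ _
    have hφbound : ∀ t : ℝ, ε ≤ t → t < ε + η → φ t ≤ c := by
      intro t ht ht'
      rcases eq_or_lt_of_le ht with rfl | ht
      · exact le_max_right _ _
      · have : t < u := by
          have := min_le_left (u - ε) ε
          linarith [ht'.trans_le (by linarith : ε + η ≤ ε + (u - ε))]
        exact (hsub ⟨ht, this⟩).le.trans (le_max_left _ _)
    have hpos' : 0 < min η (ε - c) := lt_min hηpos (by linarith)
    obtain ⟨N, hN⟩ := (htendD.eventually (eventually_lt_nhds hpos')).exists_forall_of_atTop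
    refine ⟨N, fun n hn m hm => ?_⟩
    have hbound : dist (x n) (x m) < ε + η := by
      induction m, hm using Nat.le_induction with
      | base => simpa using add_pos hε hηpos
      | succ m hm ih =>
        rcases eq_or_ne (x n) (x m) with h | h
        · have : dist (x n) (x (m + 1)) = D m := by rw [h]
          rw [this]
          have := hN m (hn.trans hm)
          have := min_le_left η (ε - c)
          linarith
        · have hd : 0 < dist (x n) (x m) := dist_pos.mpr h
          have hTd : dist (x (n + 1)) (x (m + 1)) ≤ φ (dist (x n) (x m)) := by
            rw [hstep, hstep]
            exact hcontr _ _ (hchain hm)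
          have htri : dist (x n) (x (m + 1)) ≤ D n + φ (dist (x n) (x m)) :=
            (dist_triangle (x n) (x (n + 1)) (x (m + 1))).trans
              (add_le_add_right hTd _)
          have hDn := hN n hn
          have h1 := min_le_left η (ε - c)
          have h2 := min_le_right η (ε - c)
          rcases le_or_gt ε (dist (x n) (x m)) with hcase | hcase
          · have := hφbound _ hcase ih
            linarith
          · have := hφ1 _ hd
            linarith
    exact hbound.trans_le (by linarith)
  -- Cauchy
  have hcauchy : CauchySeq x := by
    rw [Metric.cauchySeq_iff]
    intro ε hε
    obtain ⟨N, hN⟩ := key (ε / 4) (by linarith)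
    refine ⟨N, fun m hm n hn => ?_⟩
    rcases le_total m n with h | h
    · exact (hN m hm n h).trans (by linarith)
    · rw [dist_comm]
      exact (hN n hn m h).trans (by linarith)
  obtain ⟨p, hp⟩ := cauchySeq_tendsto_of_complete hcauchy
  have h1 : Tendsto (fun n => x (n + 1)) atTop (nhds p) :=
    hp.comp (tendsto_add_atTop_nat 1)
  have h2 : Tendsto (fun n => T (x n)) atTop (nhds (T p)) :=
    (hcont.tendsto p).comp hp
  have h3 : (fun n => x (n + 1)) = fun n => T (x n) := funext hstep
  rw [h3] at h1
  exact ⟨p, tendsto_nhds_unique h2 h1⟩
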